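/- For real α, ρ, γ with α > 0, ρ > 0, and s > 0 with |ω·s^α| < 1, the Sawi transform of t^(ρ−1)·E_{α,ρ}^γ(ω·t^α) equals s^(ρ−2)·(1−ω·s^α)^(−γ), where E_{α,ρ}^γ(z) = Σ_{k=0}^∞ (γ)_k · z^k / (Γ(αk+ρ) · k!) is the three-parameter Mittag-Leffler (Prabhakar) function and (γ)_k is the rising factorial. -/

import Mathlib

open Polynomial Real MeasureTheory Set

lemma poch_succ_left (γ : ℝ) (n : ℕ) :
    (ascPochhammer ℝ (n+1)).eval γ = γ * (ascPochhammer ℝ n).eval (γ+1) := by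
  rw [ascPochhammer_succ_left, X_mul, Polynomial.eval_mul_X, Polynomial.eval_comp]
  simp [mul_comm]

lemma poch_abs_le (γ : ℝ) (n : ℕ) :
    |(ascPochhammer ℝ n).eval γ| ≤ (ascPochhammer ℝ n).eval (|γ|+1) := by
  induction n with
  | zero => simp
  | succ n ih =>
    rw [ascPochhammer_succ_eval, ascPochhammer_succ_eval, abs_mul]
    have h1 : (0:ℝ) < (ascPochhammer ℝ n).eval (|γ|+1) :=
      ascPochhammer_pos n _ (by positivity)
    have h2 : |γ + n| ≤ |γ| + 1 + n := by
      calc |γ + n| ≤ |γ| + n := by simpa using abs_add_le γ n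
      _ ≤ |γ| + 1 + n := by linarith
    exact mul_le_mul ih h2 (abs_nonneg _) h1.le

lemma poch_nonneg {c : ℝ} (hc : 0 ≤ c) (n : ℕ) : 0 ≤ (ascPochhammer ℝ n).eval c := by
  induction n with
  | zero => simp
  | succ n ih =>
    rw [ascPochhammer_succ_eval]
    have : (0:ℝ) ≤ c + n := by positivity
    positivity

lemma poch_mono (c d : ℝ) (hc : 0 ≤ c) (hcd : c ≤ d) (n : ℕ) :
    (ascPochhammer ℝ n).eval c ≤ (ascPochhammer ℝ n).eval d := by
  induction n with
  | zero => simp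
  | succ n ih =>
    rw [ascPochhammer_succ_eval, ascPochhammer_succ_eval]
    have h1 := poch_nonneg hc n
    have h2 := poch_nonneg (hc.trans hcd) n
    have h3 : (0:ℝ) ≤ c + n := by positivity
    apply mul_le_mul ih (by linarith) h3 h2

lemma summable_poch_pos {c r : ℝ} (hc : 0 < c) (hr0 : 0 ≤ r) (hr : r < 1) :
    Summable (fun k : ℕ => (ascPochhammer ℝ k).eval c * r ^ k / k.factorial) := by
  rcases eq_or_lt_of_le hr0 with h | h
  · apply summable_of_ne_finset_zero (s := {0})
    intro k hk
    simp only [Finset.mem_singleton] at hk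
    simp [← h, zero_pow hk]
  · apply summable_of_ratio_test_tendsto_lt_one hr
    · filter_upwards with k
      have := ascPochhammer_pos k c hc
      positivity
    · have key : ∀ k : ℕ, ‖(ascPochhammer ℝ (k+1)).eval c * r ^ (k+1) / (k+1).factorial‖ /
          ‖(ascPochhammer ℝ k).eval c * r ^ k / k.factorial‖ = (c + k) / (k + 1) * r := by
        intro k
        have hp := ascPochhammer_pos k c hc
        have hp' : (0:ℝ) < (k.factorial : ℝ) := by positivity
        rw [ascPochhammer_succ_eval, Nat.factorial_succ]
        rw [Real.norm_of_nonneg (by positivity), Real.norm_of_nonneg (by positivity)]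
        push_cast
        rw [pow_succ]
        field_simp
      simp only [key]
      have : Filter.Tendsto (fun k : ℕ => (c + k) / (k + 1)) Filter.atTop (nhds 1) := by
        have h1 : (fun k : ℕ => (c + k) / (k + 1)) =
            fun k : ℕ => 1 + (c - 1) * (1 / (k + 1)) := by
          funext k
          have : (k:ℝ) + 1 ≠ 0 := by positivity
          field_simp
          ring
        rw [h1]
        have := tendsto_one_div_add_atTop_nhds_zero_nat (𝕜 := ℝ)
        have h2 := (this.const_mul (c-1)).const_add (1:ℝ)
        simpa using h2
      simpa using this.mul_const r

lemma summable_poch (γ x : ℝ) (hx : |x| < 1) :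
    Summable (fun k : ℕ => (ascPochhammer ℝ k).eval γ * x ^ k / k.factorial) := by
  apply Summable.of_norm_bounded (summable_poch_pos (c := |γ|+1) (by positivity) (abs_nonneg x) hx)
  intro k
  have hp : (0:ℝ) < (k.factorial : ℝ) := by positivity
  rw [Real.norm_eq_abs, abs_div, abs_mul, abs_pow, Nat.abs_cast]
  have := poch_abs_le γ k
  gcongr

noncomputable def binomF (γ x : ℝ) : ℝ :=
  ∑' k : ℕ, (ascPochhammer ℝ k).eval γ * x ^ k / k.factorial

lemma term_succ (γ y : ℝ) (m : ℕ) :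
    (ascPochhammer ℝ (m+1)).eval γ * (((m:ℝ)+1) * y ^ m) / (m+1).factorial
      = γ * ((ascPochhammer ℝ m).eval (γ+1) * y ^ m / m.factorial) := by
  rw [poch_succ_left, Nat.factorial_succ]
  have h1 : (0:ℝ) < (m.factorial : ℝ) := by positivity
  have h2 : (0:ℝ) < (m:ℝ) + 1 := by positivity
  push_cast
  field_simp

lemma deriv_sum_eq (γ x : ℝ) (hx : |x| < 1) :
    ∑' k : ℕ, (ascPochhammer ℝ k).eval γ * ((k:ℝ) * x ^ (k-1)) / k.factorial
      = γ * binomF (γ+1) x := by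
  have hsum : Summable (fun k : ℕ =>
      γ * ((ascPochhammer ℝ k).eval (γ+1) * x ^ k / k.factorial)) :=
    (summable_poch (γ+1) x hx).mul_left γ
  have hshift : ∀ k : ℕ,
      (ascPochhammer ℝ (k+1)).eval γ * (((k:ℝ)+1) * x ^ k) / (k+1).factorial
        = γ * ((ascPochhammer ℝ k).eval (γ+1) * x ^ k / k.factorial) :=
    fun k => term_succ γ x k
  have hsum2 : Summable (fun k : ℕ =>
      (ascPochhammer ℝ (k+1)).eval γ * (((k:ℝ)+1) * x ^ (k+1-1)) / (k+1).factorial) := by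
    simpa only [Nat.add_sub_cancel, hshift] using hsum
  have hsumall : Summable (fun k : ℕ =>
      (ascPochhammer ℝ k).eval γ * ((k:ℝ) * x ^ (k-1)) / k.factorial) := by
    apply (summable_nat_add_iff 1).mp
    simpa using hsum2
  rw [Summable.tsum_eq_zero_add hsumall]
  simp only [Nat.cast_zero, zero_mul, mul_zero, zero_div, zero_add, Nat.cast_add, Nat.cast_one,
    Nat.add_sub_cancel]
  rw [tsum_congr hshift, tsum_mul_left]
  rfl

lemma hasDerivAt_binomF (γ x : ℝ) (hx : |x| < 1) :
    HasDerivAt (binomF γ) (γ * binomF (γ+1) x) x := by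
  set r : ℝ := (|x| + 1) / 2 with hr_def
  have hr0 : 0 < r := by positivity
  have hr1 : r < 1 := by simp only [hr_def]; linarith
  have hxr : |x| < r := by simp only [hr_def]; linarith
  set u : ℕ → ℝ := fun k => if k = 0 then 0 else
    |γ| * ((ascPochhammer ℝ (k-1)).eval (|γ|+2) * r ^ (k-1) / (k-1).factorial) with hu_def
  have hu : Summable u := by
    apply (summable_nat_add_iff 1).mp
    have : (fun n : ℕ => u (n+1)) = fun n : ℕ =>
        |γ| * ((ascPochhammer ℝ n).eval (|γ|+2) * r ^ n / n.factorial) := by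
      funext n; simp [hu_def]
    rw [this]
    exact (summable_poch_pos (by positivity) hr0.le hr1).mul_left _
  have key := hasDerivAt_tsum_of_isPreconnected (F := ℝ) (𝕜 := ℝ) hu (Metric.isOpen_ball (x := (0:ℝ)) (ε := r))
    (convex_ball (0:ℝ) r).isPreconnected
    (g := fun n z => (ascPochhammer ℝ n).eval γ * z ^ n / n.factorial)
    (g' := fun n y => (ascPochhammer ℝ n).eval γ * ((n:ℝ) * y ^ (n-1)) / n.factorial)
    (y₀ := 0) (y := x)
    (fun n y _ => by
      have h := ((hasDerivAt_pow n y).const_mul ((ascPochhammer ℝ n).eval γ)).div_const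
        (n.factorial : ℝ)
      convert h using 1
      try ring)
    (fun n y hy => by
      have hyr : |y| < r := by simpa [Real.dist_eq] using hy
      cases n with
      | zero => simp [hu_def]
      | succ m =>
        simp only [hu_def, Nat.add_sub_cancel, Nat.succ_ne_zero, if_false, Nat.cast_add,
          Nat.cast_one]
        rw [term_succ]
        rw [Real.norm_eq_abs, abs_mul]
        have hfac : (0:ℝ) < (m.factorial:ℝ) := by positivity
        have hb1 : |(ascPochhammer ℝ m).eval (γ+1)| ≤ (ascPochhammer ℝ m).eval (|γ|+2) := by
          refine (poch_abs_le (γ+1) m).trans (poch_mono _ _ (by positivity) ?_ m)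
          have := abs_add_le γ 1
          simp only [abs_one] at this
          linarith
        have hb2 : |y| ^ m ≤ r ^ m := pow_le_pow_left₀ (abs_nonneg y) hyr.le m
        have hpos : (0:ℝ) ≤ (ascPochhammer ℝ m).eval (|γ|+2) := poch_nonneg (by positivity) m
        rw [abs_div, abs_mul, abs_pow, Nat.abs_cast]
        gcongr)
    (Metric.mem_ball_self hr0)
    (by
      apply summable_of_ne_finset_zero (s := {0})
      intro k hk
      simp only [Finset.mem_singleton] at hk
      simp [zero_pow hk])
    (by simpa [Real.dist_eq] using hxr)
  rw [deriv_sum_eq γ x hx] at key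
  exact key

lemma funid (γ x : ℝ) (hx : |x| < 1) :
    (1 - x) * binomF (γ+1) x = binomF γ x := by
  have ha : Summable (fun k : ℕ => (ascPochhammer ℝ k).eval (γ+1) * x ^ k / k.factorial) :=
    summable_poch (γ+1) x hx
  have ha' : Summable (fun k : ℕ =>
      (ascPochhammer ℝ (k+1)).eval (γ+1) * x ^ (k+1) / (k+1).factorial) :=
    (summable_nat_add_iff 1).mpr ha
  have hb : Summable (fun k : ℕ =>
      x * ((ascPochhammer ℝ k).eval (γ+1) * x ^ k / k.factorial)) := ha.mul_left x
  have hc : Summable (fun k : ℕ => (ascPochhammer ℝ k).eval γ * x ^ k / k.factorial) :=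
    summable_poch γ x hx
  have hterm : ∀ k : ℕ,
      (ascPochhammer ℝ (k+1)).eval (γ+1) * x ^ (k+1) / (k+1).factorial
        - x * ((ascPochhammer ℝ k).eval (γ+1) * x ^ k / k.factorial)
      = (ascPochhammer ℝ (k+1)).eval γ * x ^ (k+1) / (k+1).factorial := by
    intro k
    rw [ascPochhammer_succ_eval, poch_succ_left, Nat.factorial_succ, pow_succ]
    have h1 : (0:ℝ) < (k.factorial : ℝ) := by positivity
    have h2 : (0:ℝ) < (k:ℝ) + 1 := by positivity
    push_cast
    field_simp
    ring
  have lhs_eq : (1 - x) * binomF (γ+1) x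
      = 1 + ∑' k : ℕ, ((ascPochhammer ℝ (k+1)).eval (γ+1) * x ^ (k+1) / (k+1).factorial
          - x * ((ascPochhammer ℝ k).eval (γ+1) * x ^ k / k.factorial)) := by
    rw [sub_mul, one_mul]
    unfold binomF
    rw [← tsum_mul_left (a := x), Summable.tsum_eq_zero_add ha, Summable.tsum_sub ha' hb]
    simp only [ascPochhammer_zero, Polynomial.eval_one, pow_zero, Nat.factorial_zero]
    push_cast
    ring
  have rhs_eq : binomF γ x
      = 1 + ∑' k : ℕ, (ascPochhammer ℝ (k+1)).eval γ * x ^ (k+1) / (k+1).factorial := by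
    unfold binomF
    rw [Summable.tsum_eq_zero_add hc]
    simp
  rw [lhs_eq, rhs_eq, tsum_congr hterm]

lemma binomF_zero (γ : ℝ) : binomF γ 0 = 1 := by
  unfold binomF
  rw [tsum_eq_single 0 (fun k hk => by simp [zero_pow hk])]
  simp

lemma binomF_eq (γ x : ℝ) (hx : |x| < 1) : binomF γ x = (1 - x) ^ (-γ) := by
  have claim : ∀ y : ℝ, |y| < 1 →
      HasDerivAt (fun z => binomF γ z * (1 - z) ^ γ) 0 y := by
    intro y hy
    have h1y : (0:ℝ) < 1 - y := by
      have := abs_lt.mp hy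
      linarith
    have h1 := hasDerivAt_binomF γ y hy
    have h2 : HasDerivAt (fun z : ℝ => (1 - z) ^ γ) (-1 * γ * (1 - y) ^ (γ - 1)) y :=
      ((hasDerivAt_id y).const_sub 1).rpow_const (Or.inl h1y.ne')
    have h := h1.mul h2
    have hfe := funid γ y hy
    have hps : (1 - y) ^ (γ - 1) = (1 - y) ^ γ / (1 - y) := by
      rw [Real.rpow_sub h1y, Real.rpow_one]
    refine h.congr_deriv ?_
    rw [hps, ← hfe]
    field_simp
    ring
  have key : binomF γ x * (1 - x) ^ γ = 1 := by
    have hend : ∀ y : ℝ, y ∈ Set.Icc (-|x|) |x| → |y| < 1 := by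
      intro y hy
      rw [abs_lt]
      obtain ⟨h1, h2⟩ := hy
      constructor <;> [linarith [neg_abs_le x, abs_lt.mp hx]; linarith [abs_lt.mp hx]]
    have hf0 : binomF γ 0 * (1 - 0) ^ γ = 1 := by
      simp [binomF_zero, Real.one_rpow]
    rcases le_or_gt 0 x with hx0 | hx0
    · have hicc : ∀ y ∈ Set.Icc (0:ℝ) x, |y| < 1 := by
        intro y hy
        exact hend y ⟨by simp only [abs_of_nonneg hx0]; linarith [hy.1, neg_abs_le x, hy.1.trans hy.2],
          by rw [abs_of_nonneg hx0]; exact hy.2⟩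
      have := constant_of_has_deriv_right_zero
        (f := fun z => binomF γ z * (1 - z) ^ γ) (a := 0) (b := x)
        (fun y hy => (claim y (hicc y hy)).continuousAt.continuousWithinAt)
        (fun y hy => (claim y (hicc y (Set.mem_Icc_of_Ico hy))).hasDerivWithinAt)
        x (Set.right_mem_Icc.mpr hx0)
      exact this.trans hf0
    · have hicc : ∀ y ∈ Set.Icc x (0:ℝ), |y| < 1 := by
        intro y hy
        rw [abs_lt]
        have := abs_lt.mp hx
        constructor <;> [linarith [hy.1]; linarith [hy.2]]
      have := constant_of_has_deriv_right_zero
        (f := fun z => binomF γ z * (1 - z) ^ γ) (a := x) (b := 0)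
        (fun y hy => (claim y (hicc y hy)).continuousAt.continuousWithinAt)
        (fun y hy => (claim y (hicc y (Set.mem_Icc_of_Ico hy))).hasDerivWithinAt)
        0 (Set.right_mem_Icc.mpr hx0.le)
      exact this.symm.trans hf0
  have h1x : (0:ℝ) < 1 - x := by
    have := abs_lt.mp hx
    linarith
  rw [Real.rpow_neg h1x.le]
  exact eq_inv_of_mul_eq_one_left key

lemma gamma_int {s : ℝ} (A : ℝ) (hs : 0 < s) (hA : 0 < A) :
    ∫ t in Set.Ioi (0:ℝ), t ^ (A-1) * Real.exp (-(1/s * t)) = s ^ A * Real.Gamma A := by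
  rw [integral_rpow_mul_exp_neg_mul_Ioi hA (by positivity), one_div_one_div]

lemma gamma_integrable {s : ℝ} (A : ℝ) (hs : 0 < s) (hA : 0 < A) :
    MeasureTheory.IntegrableOn (fun t : ℝ => t ^ (A-1) * Real.exp (-(1/s * t)))
      (Set.Ioi 0) := by
  have := integrableOn_rpow_mul_exp_neg_mul_rpow (p := 1) (s := A-1) (b := 1/s)
    (by linarith) one_pos (by positivity)
  simpa [Real.rpow_one, neg_mul] using this

/-- The Sawi transform of `ψ` at `s`. -/
noncomputable def Sawi (ψ : ℝ → ℝ) (s : ℝ) : ℝ :=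
  (1 / s ^ 2) * ∫ t in Ioi (0 : ℝ), ψ t * Real.exp (-t / s)

/-- The three-parameter Mittag-Leffler (Prabhakar) function
`E_{α,ρ}^γ(z) = ∑ (γ)_k zᵏ / (Γ(αk+ρ) k!)`. -/
noncomputable def prabhakarML (α ρ γ z : ℝ) : ℝ :=
  ∑' k : ℕ, (ascPochhammer ℝ k).eval γ * z ^ k /
    (Real.Gamma (α * k + ρ) * (Nat.factorial k))

theorem sawi_prabhakarML (α ρ γ ω s : ℝ) (hα : 0 < α) (hρ : 0 < ρ) (hs : 0 < s)
    (hω : |ω * s ^ α| < 1) :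
    Sawi (fun t => t ^ (ρ - 1) * prabhakarML α ρ γ (ω * t ^ α)) s
      = s ^ (ρ - 2) * (1 - ω * s ^ α) ^ (-γ) := by
  set x := ω * s ^ α with hx_def
  set A : ℕ → ℝ := fun k => α * k + ρ with hA_def
  have hA : ∀ k : ℕ, 0 < A k := fun k => by
    have : (0:ℝ) ≤ α * k := by positivity
    simp only [hA_def]; linarith
  set c : ℕ → ℝ := fun k => (ascPochhammer ℝ k).eval γ * ω ^ k /
      (Real.Gamma (A k) * k.factorial) with hc_def
  set F : ℕ → ℝ → ℝ := fun k t => c k * (t ^ (A k - 1) * Real.exp (-(1/s * t))) with hF_def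
  have hGamma_pos : ∀ k : ℕ, 0 < Real.Gamma (A k) := fun k => Real.Gamma_pos_of_pos (hA k)
  have hFint : ∀ k, IntegrableOn (F k) (Ioi 0) := fun k =>
    (gamma_integrable (A k) hs (hA k)).const_mul (c k)
  have hsA : ∀ k : ℕ, s ^ (A k) = (s ^ α) ^ k * s ^ ρ := by
    intro k
    simp only [hA_def]
    rw [Real.rpow_add hs, Real.rpow_mul hs.le, Real.rpow_natCast]
  have hFval : ∀ k, (∫ t in Ioi (0:ℝ), F k t)
      = (ascPochhammer ℝ k).eval γ * x ^ k * s ^ ρ / k.factorial := by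
    intro k
    simp only [hF_def]
    rw [MeasureTheory.integral_const_mul, gamma_int (A k) hs (hA k), hsA k]
    have hg := (hGamma_pos k).ne'
    have hf : ((k.factorial:ℝ)) ≠ 0 := by positivity
    simp only [hc_def, hx_def]
    field_simp
    ring
  have hFnorm : ∀ k, (∫ t in Ioi (0:ℝ), ‖F k t‖)
      = |(ascPochhammer ℝ k).eval γ| * |x| ^ k * s ^ ρ / k.factorial := by
    intro k
    have h1 : (∫ t in Ioi (0:ℝ), ‖F k t‖)
        = |c k| * ∫ t in Ioi (0:ℝ), t ^ (A k - 1) * Real.exp (-(1/s * t)) := by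
      rw [← MeasureTheory.integral_const_mul]
      apply setIntegral_congr_fun measurableSet_Ioi
      intro t ht
      have ht' : (0:ℝ) < t := ht
      have hnn : (0:ℝ) ≤ t ^ (A k - 1) * Real.exp (-(1/s * t)) := by positivity
      simp only [hF_def, Real.norm_eq_abs]
      rw [abs_mul, abs_of_nonneg hnn]
    rw [h1, gamma_int (A k) hs (hA k), hsA k]
    have hg := hGamma_pos k
    have hf : ((k.factorial:ℝ)) ≠ 0 := by positivity
    have hsα : (0:ℝ) < s ^ α := Real.rpow_pos_of_pos hs α
    simp only [hc_def, hx_def, abs_div, abs_mul, abs_pow, Nat.abs_cast,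
      abs_of_pos hg, abs_of_pos hsα]
    field_simp
    ring
  have hsum : Summable (fun k : ℕ => ∫ t in Ioi (0:ℝ), ‖F k t‖) := by
    simp only [hFnorm]
    apply Summable.of_nonneg_of_le (fun k => by positivity) (fun k => ?_)
      ((summable_poch_pos (c := |γ|+1) (by positivity) (abs_nonneg x) hω).mul_left (s^ρ))
    have h := poch_abs_le γ k
    have heq : |(ascPochhammer ℝ k).eval γ| * |x| ^ k * s ^ ρ / k.factorial
        = s ^ ρ * (|(ascPochhammer ℝ k).eval γ| * |x| ^ k / k.factorial) := by ring
    rw [heq]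
    gcongr
  have hinter := integral_tsum_of_summable_integral_norm
    (μ := MeasureTheory.volume.restrict (Ioi 0)) hFint hsum
  have hpt : ∀ t ∈ Ioi (0:ℝ), (∑' k, F k t)
      = (t ^ (ρ-1) * prabhakarML α ρ γ (ω * t ^ α)) * Real.exp (-t/s) := by
    intro t ht
    have ht' : (0:ℝ) < t := ht
    have hexp : Real.exp (-t/s) = Real.exp (-(1/s * t)) := by
      rw [one_div_mul_eq_div, neg_div]
    rw [prabhakarML, mul_comm (t^(ρ-1)) _, mul_assoc, ← tsum_mul_right]
    apply tsum_congr
    intro k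
    simp only [hF_def, hc_def]
    rw [hexp]
    have h1 : (ω * t ^ α) ^ k = ω ^ k * t ^ (α * (k:ℝ)) := by
      rw [mul_pow, ← Real.rpow_natCast (t ^ α) k, ← Real.rpow_mul ht'.le]
    have h2 : t ^ (A k - 1) = t ^ (α * (k:ℝ)) * t ^ (ρ - 1) := by
      rw [← Real.rpow_add ht']
      congr 1
      simp only [hA_def]; ring
    rw [h1, h2]
    have hg := (hGamma_pos k).ne'
    have hg' : Real.Gamma (α * k + ρ) ≠ 0 := hg
    have hf : ((k.factorial:ℝ)) ≠ 0 := by positivity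
    field_simp
    ring
  have hint_eq : (∫ t in Ioi (0:ℝ),
      (t ^ (ρ-1) * prabhakarML α ρ γ (ω * t ^ α)) * Real.exp (-t/s))
      = ∑' k, ∫ t in Ioi (0:ℝ), F k t := by
    rw [hinter]
    exact (setIntegral_congr_fun measurableSet_Ioi hpt).symm
  rw [Sawi, hint_eq]
  have htsum : (∑' k, ∫ t in Ioi (0:ℝ), F k t) = s ^ ρ * binomF γ x := by
    rw [tsum_congr hFval]
    have : ∀ k : ℕ, (ascPochhammer ℝ k).eval γ * x ^ k * s ^ ρ / k.factorial
        = s ^ ρ * ((ascPochhammer ℝ k).eval γ * x ^ k / k.factorial) := fun k => by ring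
    rw [tsum_congr this, tsum_mul_left]
    rfl
  rw [htsum, binomF_eq γ x hω]
  have h2 : s ^ (ρ - 2) = s ^ ρ / s ^ 2 := by
    rw [show (2:ℝ) = ((2:ℕ):ℝ) by norm_num] at *
    rw [← Real.rpow_natCast s 2, ← Real.rpow_sub hs]
  rw [h2]
  ring
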